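/- arXiv:2007.00484 — 2 statements merged into one kernel-verified Lean document; each statement's English description precedes it below -/
import Mathlib

section
/- Let V, W be finite-dimensional inner product spaces, A ∈ Lin(V, W) of rank r > 0, and let p(λ) = (−1)^d Σ_{j=0}^d a_j λ^{d−j} be the characteristic polynomial of A A* ∈ Lin(W, W), where d = dim W and a_0 = 1. Then a_r ≠ 0 and the Moore–Penrose pseudoinverse satisfies Decell's formula: A† = −(1/a_r) A* ( Σ_{i=1}^r a_{i−1} (A A*)^{r−i} ). -/
open Module LinearMap Metric Filter Topology Polynomial

/-- Orthogonal projection onto a submodule, as an endomorphism. -/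
noncomputable def orthProj {E : Type*} [NormedAddCommGroup E] [InnerProductSpace ℝ E]
    [FiniteDimensional ℝ E] (K : Submodule ℝ E) : E →L[ℝ] E :=
  K.subtypeL.comp (K.orthogonalProjectionOnto)

/-- `X` is the Moore–Penrose pseudoinverse of `A`: `A X = Proj_{im A}`,
`X A = Proj_{im A*}`, together with the normalization `X Proj_{im A} = X`
(i.e. `X` vanishes on `(im A)ᗮ`), which pins `X` down uniquely. -/
def IsMP {V W : Type*} [NormedAddCommGroup V] [InnerProductSpace ℝ V] [FiniteDimensional ℝ V]
    [NormedAddCommGroup W] [InnerProductSpace ℝ W] [FiniteDimensional ℝ W]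
    (A : V →L[ℝ] W) (X : W →L[ℝ] V) : Prop :=
  A ∘L X = orthProj (LinearMap.range (A : V →ₗ[ℝ] W)) ∧
  X ∘L A = orthProj (LinearMap.range (ContinuousLinearMap.adjoint A : W →ₗ[ℝ] V)) ∧
  X ∘L orthProj (LinearMap.range (A : V →ₗ[ℝ] W)) = X

/-!
`B = A A*` is self-adjoint, so its generalized `0`-eigenspace is just its kernel, of dimension
`d - r`. Hence the characteristic polynomial is `X^(d-r) q` with `q(0) = a_r ≠ 0`, and
Cayley–Hamilton `B^(d-r) q(B) = 0` improves to `B q(B) = 0`. Writing `q = X q' + a_r`, the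
operator `B q'(B) = q(B) - a_r` is `-a_r` on `im B = im A` and `0` on `ker B = (im A)ᗮ`, i.e.
`B q'(B) = -a_r Proj_{im A}`. So `X := -(1/a_r) A* q'(B)` satisfies `A X = Proj_{im A}` and takes
values in `im A*`, which forces `X = A†`; and `q'(B)` is the sum in Decell's formula.
-/

namespace Polynomial

theorem X_pow_natTrailingDegree_dvd {R : Type*} [Semiring R] (p : R[X]) :
    X ^ p.natTrailingDegree ∣ p :=
  X_pow_dvd_iff.mpr fun _ => coeff_eq_zero_of_lt_natTrailingDegree

theorem aeval_divX_eq_sum_range {R A : Type*} [CommSemiring R] [Semiring A] [Algebra R A]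
    {q : R[X]} {n : ℕ} (hq : q.natDegree ≤ n) (x : A) :
    aeval x q.divX = ∑ k ∈ Finset.range n, q.coeff (k + 1) • x ^ k := by
  rw [aeval_eq_sum_range' (natDegree_divX_le.trans_lt (Nat.lt_succ_of_le hq)),
    Finset.sum_range_succ, coeff_divX, coeff_eq_zero_of_natDegree_lt (by omega), zero_smul,
    add_zero]
  simp only [coeff_divX]

end Polynomial

theorem Module.End.IsFinitelySemisimple.aeval_X_mul_eq_zero_of_aeval_X_pow_mul_eq_zero
    {R M : Type*} [CommRing R] [AddCommGroup M] [Module R M] {f : End R M}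
    (hf : f.IsFinitelySemisimple) {q : R[X]} {m : ℕ} (h : aeval f (X ^ m * q) = 0) :
    aeval f (X * q) = 0 := by
  ext x
  have hx : aeval f q x ∈ f.maxGenEigenspace 0 := by
    rw [mem_maxGenEigenspace]
    refine ⟨m, ?_⟩
    simpa using congr($h x)
  rw [hf.maxGenEigenspace_eq_eigenspace, eigenspace_zero] at hx
  simpa using hx

namespace LinearMap.IsSymmetric

variable {𝕜 E : Type*} [RCLike 𝕜] [NormedAddCommGroup E] [InnerProductSpace 𝕜 E]
  [FiniteDimensional 𝕜 E] {T : E →ₗ[𝕜] E}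

theorem natTrailingDegree_charpoly (hT : T.IsSymmetric) :
    T.charpoly.natTrailingDegree = finrank 𝕜 (ker T) := by
  rw [← finrank_maxGenEigenspace_zero_eq, hT.isFinitelySemisimple.maxGenEigenspace_eq_eigenspace,
    Module.End.eigenspace_zero]

theorem charpoly_coeff_finrank_ker_ne_zero (hT : T.IsSymmetric) :
    T.charpoly.coeff (finrank 𝕜 (ker T)) ≠ 0 := by
  rw [← hT.natTrailingDegree_charpoly]
  exact mt trailingCoeff_eq_zero.mp T.charpoly_monic.ne_zero

theorem mul_aeval_divX_eq_smul_starProjection (hT : T.IsSymmetric) {q : 𝕜[X]}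
    (hq : aeval T (X * q) = 0) :
    T * aeval T q.divX = -q.coeff 0 • ((range T).starProjection : E →ₗ[𝕜] E) := by
  set R := aeval T q.divX
  have hTR : T * R = aeval T q - q.coeff 0 • 1 := by
    have := congrArg (aeval T) (X_mul_divX_add q)
    rw [map_add, map_mul, aeval_X, aeval_C, Algebra.algebraMap_eq_smul_one] at this
    exact eq_sub_of_add_eq this
  have hRT : R * T = T * R := by
    simpa only [map_mul, aeval_X] using congrArg (aeval T) (mul_comm q.divX X)
  have hqT : aeval T q * T = 0 := by
    rwa [mul_comm, map_mul, aeval_X] at hq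
  ext w
  set u := (range T).starProjection w
  obtain ⟨y, hy⟩ : u ∈ range T := (range T).starProjection_apply_mem w
  have hker : w - u ∈ ker T :=
    hT.orthogonal_range ▸ (range T).sub_starProjection_mem_orthogonal w
  have hu : (T * R) u = -q.coeff 0 • u := by
    rw [← hy, hTR, sub_apply, ← Module.End.mul_apply, hqT]
    simp
  have hv : (T * R) (w - u) = 0 := by
    rw [← hRT, Module.End.mul_apply, mem_ker.mp hker, map_zero]
  calc (T * R) w = (T * R) u + (T * R) (w - u) := by rw [← map_add, add_sub_cancel]
    _ = _ := by simp [hu, hv, u]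

theorem mul_sum_charpoly_coeff_eq_smul_starProjection (hT : T.IsSymmetric) {r : ℕ}
    (hr : finrank 𝕜 (range T) = r) :
    T * ∑ i ∈ Finset.range r, T.charpoly.coeff (finrank 𝕜 E - i) • T ^ (r - 1 - i) =
      -T.charpoly.coeff (finrank 𝕜 E - r) • ((range T).starProjection : E →ₗ[𝕜] E) := by
  set m := finrank 𝕜 (ker T)
  have hdim : finrank 𝕜 E = r + m := by rw [← hr, finrank_range_add_finrank_ker]
  obtain ⟨q, hq⟩ : X ^ m ∣ T.charpoly := by
    simpa only [hT.natTrailingDegree_charpoly] using X_pow_natTrailingDegree_dvd T.charpoly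
  have hcoeff (k : ℕ) : q.coeff k = T.charpoly.coeff (k + m) := by rw [hq, coeff_X_pow_mul]
  have hdeg : q.natDegree ≤ r := by
    refine natDegree_le_iff_coeff_eq_zero.mpr fun k hk => ?_
    rw [hcoeff]
    exact coeff_eq_zero_of_natDegree_lt (by rw [charpoly_natDegree]; omega)
  have hXq : aeval T (X * q) = 0 :=
    hT.isFinitelySemisimple.aeval_X_mul_eq_zero_of_aeval_X_pow_mul_eq_zero
      (hq ▸ T.aeval_self_charpoly)
  have hsum : ∑ i ∈ Finset.range r, T.charpoly.coeff (finrank 𝕜 E - i) • T ^ (r - 1 - i) =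
      aeval T q.divX := by
    rw [aeval_divX_eq_sum_range hdeg, ← Finset.sum_range_reflect]
    refine Finset.sum_congr rfl fun k hk => ?_
    rw [Finset.mem_range] at hk
    rw [hcoeff]
    congr 3 <;> omega
  rw [hsum, hT.mul_aeval_divX_eq_smul_starProjection hXq, hcoeff, hdim]
  congr 3
  omega

end LinearMap.IsSymmetric

theorem ContinuousLinearMap.range_self_comp_adjoint {𝕜 E F : Type*} [RCLike 𝕜]
    [NormedAddCommGroup E] [InnerProductSpace 𝕜 E] [CompleteSpace E]
    [NormedAddCommGroup F] [InnerProductSpace 𝕜 F] [CompleteSpace F] [FiniteDimensional 𝕜 F]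
    (A : E →L[𝕜] F) :
    range (A ∘L adjoint A : F →ₗ[𝕜] F) = range (A : E →ₗ[𝕜] F) := by
  rw [← Submodule.orthogonal_orthogonal (range (A : E →ₗ[𝕜] F)), A.orthogonal_range,
    ← A.ker_self_comp_adjoint, ← (isPositive_self_comp_adjoint A).isSymmetric.orthogonal_range,
    Submodule.orthogonal_orthogonal]

theorem IsMP.eq_of_comp_eq_orthProj {V W : Type*}
    [NormedAddCommGroup V] [InnerProductSpace ℝ V] [FiniteDimensional ℝ V]
    [NormedAddCommGroup W] [InnerProductSpace ℝ W] [FiniteDimensional ℝ W]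
    {A : V →L[ℝ] W} {X Y : W →L[ℝ] V} (hX : IsMP A X)
    (hAY : A ∘L Y = orthProj (range (A : V →ₗ[ℝ] W)))
    (hY : range (Y : W →ₗ[ℝ] V) ≤ range (ContinuousLinearMap.adjoint A : W →ₗ[ℝ] V)) :
    X = Y := by
  calc X = X ∘L orthProj (range (A : V →ₗ[ℝ] W)) := hX.2.2.symm
    _ = (X ∘L A) ∘L Y := by rw [← hAY]; rfl
    _ = Y := by
      rw [hX.2.1]
      ext w
      exact Submodule.starProjection_eq_self_iff.mpr (hY ⟨w, rfl⟩)

theorem decell_formula_general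
    {V W : Type*} [NormedAddCommGroup V] [InnerProductSpace ℝ V] [FiniteDimensional ℝ V]
    [NormedAddCommGroup W] [InnerProductSpace ℝ W] [FiniteDimensional ℝ W]
    (A : V →L[ℝ] W) (Adag : W →L[ℝ] V) (hA : IsMP A Adag)
    (r : ℕ) (hr : finrank ℝ (LinearMap.range (A : V →ₗ[ℝ] W)) = r)
    (d : ℕ) (hd : d = finrank ℝ W) (a : ℕ → ℝ)
    (ha : ∀ j, a j =
      (((A ∘L ContinuousLinearMap.adjoint A : W →L[ℝ] W) : W →ₗ[ℝ] W)).charpoly.coeff (d - j)) :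
    a r ≠ 0 ∧
    Adag = (-(a r)⁻¹) • ((ContinuousLinearMap.adjoint A) ∘L
      (∑ i ∈ Finset.range r, a i • (A ∘L ContinuousLinearMap.adjoint A) ^ (r - 1 - i))) := by
  subst hd
  set B := A ∘L ContinuousLinearMap.adjoint A
  have hB : (B : W →ₗ[ℝ] W).IsSymmetric := (A.isPositive_self_comp_adjoint).isSymmetric
  have hrB : finrank ℝ (range (B : W →ₗ[ℝ] W)) = r := by rw [A.range_self_comp_adjoint, hr]
  have har : a r ≠ 0 := by
    rw [ha, ← hrB, ← finrank_range_add_finrank_ker (B : W →ₗ[ℝ] W),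
      Nat.add_sub_cancel_left]
    exact hB.charpoly_coeff_finrank_ker_ne_zero
  refine ⟨har, hA.eq_of_comp_eq_orthProj ?_ ?_⟩
  · apply ContinuousLinearMap.coe_injective
    have hBsum := hB.mul_sum_charpoly_coeff_eq_smul_starProjection hrB
    simp only [← ha] at hBsum
    simp only [ContinuousLinearMap.toLinearMap_comp, ContinuousLinearMap.toLinearMap_smul,
      ContinuousLinearMap.toLinearMap_sum, ContinuousLinearMap.toLinearMap_pow]
    rw [LinearMap.comp_smul, ← LinearMap.comp_assoc, ← ContinuousLinearMap.toLinearMap_comp,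
      ← Module.End.mul_eq_comp, hBsum, smul_smul, neg_mul_neg, inv_mul_cancel₀ har, one_smul]
    congr 2
    exact A.range_self_comp_adjoint
  · exact (range_smul_le_range _ _).trans (range_comp_le_range _ _)

/-- Decell's formula: if `rank A = r > 0` and `a_j` are the coefficients of the
characteristic polynomial of `A A*` (so that `p(λ) = (−1)^d ∑_j a_j λ^{d−j}`, `a_0 = 1`,
i.e. `a j` is the coefficient of `λ^{d−j}` in the monic characteristic polynomial),
then `a_r ≠ 0` and `A† = −(1/a_r) A* (∑_{i=1}^r a_{i−1} (A A*)^{r−i})`. -/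
theorem decell_formula
    {V W : Type*} [NormedAddCommGroup V] [InnerProductSpace ℝ V] [FiniteDimensional ℝ V]
    [NormedAddCommGroup W] [InnerProductSpace ℝ W] [FiniteDimensional ℝ W]
    (A : V →L[ℝ] W) (Adag : W →L[ℝ] V) (hA : IsMP A Adag)
    (r : ℕ) (hr : finrank ℝ (LinearMap.range (A : V →ₗ[ℝ] W)) = r) (hr0 : 0 < r)
    (d : ℕ) (hd : d = finrank ℝ W) (a : ℕ → ℝ)
    (ha : ∀ j, a j =
      (((A ∘L ContinuousLinearMap.adjoint A : W →L[ℝ] W) : W →ₗ[ℝ] W)).charpoly.coeff (d - j)) :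
    a r ≠ 0 ∧
    Adag = (-(a r)⁻¹) • ((ContinuousLinearMap.adjoint A) ∘L
      (∑ i ∈ Finset.range r, a i • (A ∘L ContinuousLinearMap.adjoint A) ^ (r - 1 - i))) :=
  decell_formula_general A Adag hA r hr d hd a ha
end

section
/- Let V, W be finite-dimensional inner product spaces and suppose 𝒜 : ℝⁿ \ {0} → Lin(V, W) is given by 𝒜(ξ) = Σ_{|α|=k} ξ^α A_α (a homogeneous polynomial of degree k with coefficients A_α ∈ Lin(V,W)). If the function ξ ↦ dim ker 𝒜(ξ) is constant on ℝⁿ \ {0}, then the map ξ ↦ Proj_{ker 𝒜(ξ)} ∈ Lin(V, V) is smooth on ℝⁿ \ {0}. -/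
open Module LinearMap Metric Filter Topology Polynomial

section Aux

variable {V W : Type*} [NormedAddCommGroup V] [InnerProductSpace ℝ V] [FiniteDimensional ℝ V]
  [NormedAddCommGroup W] [InnerProductSpace ℝ W] [FiniteDimensional ℝ W]

local notation "⟪" x ", " y "⟫" => @inner ℝ _ _ x y

lemma orthProj_apply (K : Submodule ℝ V) (x : V) :
    orthProj K x = (K.orthogonalProjectionOnto x : V) := rfl

lemma orthProj_mem (K : Submodule ℝ V) (x : V) : orthProj K x ∈ K :=
  (K.orthogonalProjectionOnto x).2

lemma orthProj_eq_self (K : Submodule ℝ V) {x : V} (h : x ∈ K) : orthProj K x = x := by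
  rw [orthProj_apply]; exact (Submodule.starProjection_eq_self_iff (K := K)).2 h

lemma range_orthProj (K : Submodule ℝ V) : LinearMap.range (orthProj K : V →ₗ[ℝ] V) = K := by
  apply le_antisymm
  · rintro x ⟨y, rfl⟩; exact orthProj_mem K y
  · intro x hx; exact ⟨x, orthProj_eq_self K hx⟩

lemma isUnit_of_injective_clm (R : V →L[ℝ] V) (h : Function.Injective R) : IsUnit R := by
  have hb : Function.Bijective (R : V →ₗ[ℝ] V) :=
    ⟨h, (LinearMap.injective_iff_surjective).1 h⟩
  let e : V ≃ₗ[ℝ] V := LinearEquiv.ofBijective _ hb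
  let e' : V ≃L[ℝ] V := e.toContinuousLinearEquiv
  refine ⟨e'.toUnit, ?_⟩
  ext x; rfl

lemma orthProj_eq_of_idempotent (Q : V →L[ℝ] V) (hQ : Q * Q = Q) :
    IsUnit (Q + ContinuousLinearMap.adjoint Q - 1) ∧
    orthProj (LinearMap.range (Q : V →ₗ[ℝ] V)) =
      Q * Ring.inverse (Q + ContinuousLinearMap.adjoint Q - 1) := by
  set Q' : V →L[ℝ] V := ContinuousLinearMap.adjoint Q with hQ'def
  have hQ' : Q' * Q' = Q' := by
    rw [hQ'def, ContinuousLinearMap.mul_def, ← ContinuousLinearMap.adjoint_comp,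
      ← ContinuousLinearMap.mul_def, hQ]
  set R : V →L[ℝ] V := Q + Q' - 1 with hRdef
  have happ : ∀ (B C : V →L[ℝ] V) (v : V), (B * C) v = B (C v) := fun B C v => rfl
  have hRapp : ∀ v, R v = Q v + Q' v - v := by
    intro v
    simp [hRdef, ContinuousLinearMap.sub_apply, ContinuousLinearMap.add_apply]
  have hQapp : ∀ v, Q (Q v) = Q v := by
    intro v; rw [← happ Q Q v, hQ]
  have hQ'app : ∀ v, Q' (Q' v) = Q' v := by
    intro v; rw [← happ Q' Q' v, hQ']
  have hinj : Function.Injective R := by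
    rw [injective_iff_map_eq_zero]
    intro v hv
    rw [hRapp v, sub_eq_zero] at hv
    have hQb : Q (Q' v) = 0 := by
      have h2 := congrArg Q hv
      rw [map_add, hQapp] at h2
      exact add_left_cancel (h2.trans (add_zero (Q v)).symm)
    have hb : Q' v = 0 := by
      have : ⟪Q' v, Q' v⟫ = 0 := by
        rw [hQ'def, ContinuousLinearMap.adjoint_inner_left, ← hQ'def, hQb, inner_zero_right]
      exact inner_self_eq_zero.mp this
    have hQ'a : Q' (Q v) = 0 := by
      have h2 := congrArg Q' hv
      rw [map_add, hQ'app] at h2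
      exact add_right_cancel (h2.trans (zero_add (Q' v)).symm)
    have ha : Q v = 0 := by
      have : ⟪Q v, Q v⟫ = 0 := by
        rw [real_inner_comm, ← ContinuousLinearMap.adjoint_inner_left Q, ← hQ'def,
          hQ'a, inner_zero_left]
      exact inner_self_eq_zero.mp this
    rw [← hv, ha, hb, add_zero]
    -- goal should be closed; if 0=0 remains:

  obtain ⟨u, hu⟩ := isUnit_of_injective_clm R hinj
  refine ⟨⟨u, hu⟩, ?_⟩
  have hRinv : Ring.inverse R = (↑u⁻¹ : V →L[ℝ] V) := by
    rw [← hu, Ring.inverse_unit]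
  have huu : R * (↑u⁻¹ : V →L[ℝ] V) = 1 := by
    rw [← hu, ← Units.val_mul, mul_inv_cancel, Units.val_one]
  have hQ'R : Q' * R = Q' * Q := by
    rw [hRdef, mul_sub, mul_add, hQ', mul_one]; abel
  ext x
  rw [hRinv]
  have hmem : Q ((↑u⁻¹ : V →L[ℝ] V) x) ∈ LinearMap.range (Q : V →ₗ[ℝ] V) := ⟨_, rfl⟩
  have key : ((LinearMap.range (Q : V →ₗ[ℝ] V)).orthogonalProjectionOnto x : V)
      = Q ((↑u⁻¹ : V →L[ℝ] V) x) := by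
    apply Submodule.eq_starProjection_of_mem_of_inner_eq_zero hmem
    rintro w ⟨y, rfl⟩
    rw [real_inner_comm, ContinuousLinearMap.coe_coe, ← ContinuousLinearMap.adjoint_inner_right Q, ← hQ'def]
    have hz : Q' (x - Q ((↑u⁻¹ : V →L[ℝ] V) x)) = 0 := by
      rw [map_sub]
      have h1 : Q' (Q ((↑u⁻¹ : V →L[ℝ] V) x)) = Q' (R ((↑u⁻¹ : V →L[ℝ] V) x)) := by
        rw [← happ Q' Q, ← happ Q' R, hQ'R]
      have h2 : R ((↑u⁻¹ : V →L[ℝ] V) x) = x := by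
        rw [← happ R _, huu]; rfl
      rw [h1, h2, sub_self]
    rw [hz, inner_zero_right]
  exact key

lemma idem_and_range (A : V →L[ℝ] W) (K₀ : Submodule ℝ V)
    (hdim : finrank ℝ K₀ = finrank ℝ (LinearMap.ker (A : V →ₗ[ℝ] W)))
    (u : (V →L[ℝ] V)ˣ)
    (hu : (↑u : V →L[ℝ] V) = (ContinuousLinearMap.adjoint A) ∘L A + orthProj K₀) :
    ((↑u⁻¹ : V →L[ℝ] V) * orthProj K₀) * ((↑u⁻¹ : V →L[ℝ] V) * orthProj K₀)
       = (↑u⁻¹ : V →L[ℝ] V) * orthProj K₀ ∧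
    LinearMap.range (((↑u⁻¹ : V →L[ℝ] V) * orthProj K₀ : V →L[ℝ] V) : V →ₗ[ℝ] V) = LinearMap.ker (A : V →ₗ[ℝ] W) := by
  set Q : V →L[ℝ] V := (↑u⁻¹ : V →L[ℝ] V) * orthProj K₀ with hQdef
  have happ : ∀ (B C : V →L[ℝ] V) (v : V), (B * C) v = B (C v) := fun B C v => rfl
  have hfix : ∀ v ∈ LinearMap.ker (A : V →ₗ[ℝ] W), Q v = v := by
    intro v hv
    have hAv : A v = 0 := hv
    have h1 : (↑u : V →L[ℝ] V) v = orthProj K₀ v := by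
      rw [hu]
      simp [ContinuousLinearMap.add_apply, ContinuousLinearMap.comp_apply, hAv]
    have h2 : (↑u⁻¹ : V →L[ℝ] V) ((↑u : V →L[ℝ] V) v) = v := by
      rw [← happ, ← Units.val_mul, inv_mul_cancel, Units.val_one]; rfl
    rw [hQdef, happ, ← h1, h2]
  have hle : LinearMap.ker (A : V →ₗ[ℝ] W) ≤ LinearMap.range (Q : V →ₗ[ℝ] V) := by
    intro v hv; exact ⟨v, hfix v hv⟩
  have hrange : LinearMap.range (Q : V →ₗ[ℝ] V) = LinearMap.ker (A : V →ₗ[ℝ] W) := by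
    refine (Submodule.eq_of_le_of_finrank_le hle ?_).symm
    have hcomp : LinearMap.range (Q : V →ₗ[ℝ] V)
        = Submodule.map ((↑u⁻¹ : V →L[ℝ] V) : V →ₗ[ℝ] V) (LinearMap.range (orthProj K₀ : V →ₗ[ℝ] V)) := by
      ext x
      constructor
      · rintro ⟨y, rfl⟩
        exact ⟨orthProj K₀ y, ⟨y, rfl⟩, rfl⟩
      · rintro ⟨z, ⟨y, rfl⟩, rfl⟩
        exact ⟨y, rfl⟩
    rw [hcomp, range_orthProj]
    calc finrank ℝ (Submodule.map ((↑u⁻¹ : V →L[ℝ] V) : V →ₗ[ℝ] V) K₀) ≤ finrank ℝ K₀ :=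
          Submodule.finrank_map_le _ _
      _ = finrank ℝ (LinearMap.ker (A : V →ₗ[ℝ] W)) := hdim
  refine ⟨?_, hrange⟩
  ext v
  rw [happ Q Q v]
  have : Q v ∈ LinearMap.ker (A : V →ₗ[ℝ] W) := hrange ▸ LinearMap.mem_range_self _ v
  exact hfix _ this

lemma isUnit_S (A : V →L[ℝ] W) :
    IsUnit ((ContinuousLinearMap.adjoint A) ∘L A + orthProj (LinearMap.ker (A : V →ₗ[ℝ] W))) := by
  apply isUnit_of_injective_clm
  rw [injective_iff_map_eq_zero]
  intro v hv
  set K := LinearMap.ker (A : V →ₗ[ℝ] W)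
  have hv' : (ContinuousLinearMap.adjoint A) (A v) + orthProj K v = 0 := hv
  have h := congrArg (fun w : V => (inner ℝ w v : ℝ)) hv'
  simp only [inner_add_left, inner_zero_left] at h
  have h1 : ⟪(ContinuousLinearMap.adjoint A) (A v), v⟫ = ⟪A v, A v⟫ := by
    rw [ContinuousLinearMap.adjoint_inner_left]
  have h2 : ⟪orthProj K v, v⟫ = ⟪orthProj K v, orthProj K v⟫ := by
    have h4 : ⟪v - orthProj K v, orthProj K v⟫ = 0 :=
      Submodule.starProjection_inner_eq_zero (K := K) v (orthProj K v) (orthProj_mem K v)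
    rw [inner_sub_left] at h4
    have h5 : ⟪v, orthProj K v⟫ = ⟪orthProj K v, orthProj K v⟫ := by linarith
    rw [real_inner_comm]
    exact h5
  rw [h1, h2] at h
  have hA0 : ⟪A v, A v⟫ = 0 ∧ ⟪orthProj K v, orthProj K v⟫ = 0 := by
    constructor <;> nlinarith [real_inner_self_nonneg (x := A v),
      real_inner_self_nonneg (x := orthProj K v)]
  have hAv : A v = 0 := inner_self_eq_zero.mp hA0.1
  have hPv : orthProj K v = 0 := inner_self_eq_zero.mp hA0.2
  have : v ∈ K := hAv
  rw [orthProj_eq_self K this] at hPv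
  exact hPv

lemma contDiff_adjoint' :
    ContDiff ℝ (⊤ : WithTop ℕ∞) (fun B : V →L[ℝ] W => ContinuousLinearMap.adjoint B) := by
  haveI : FiniteDimensional ℝ (V →L[ℝ] W) := by infer_instance
  let L : (V →L[ℝ] W) →ₗ[ℝ] (W →L[ℝ] V) :=
    { toFun := ContinuousLinearMap.adjoint
      map_add' := fun A B => by simp [map_add]
      map_smul' := fun c A => by
        simp only [RingHom.id_apply]
        rw [show c • A = (c : ℝ) • A from rfl]
        exact (ContinuousLinearMap.adjoint (𝕜 := ℝ)).map_smul' c A }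
  exact (LinearMap.toContinuousLinearMap L).contDiff

end Aux

/-- If `𝒜(ξ) = ∑_{|α|=k} ξ^α A_α` is a homogeneous polynomial symbol of degree `k` and
`ξ ↦ dim ker 𝒜(ξ)` is constant on `ℝⁿ \ {0}`, then `ξ ↦ Proj_{ker 𝒜(ξ)}` is smooth
on `ℝⁿ \ {0}`. -/
theorem proj_ker_smooth_of_constant_rank
    {V W : Type*} [NormedAddCommGroup V] [InnerProductSpace ℝ V] [FiniteDimensional ℝ V]
    [NormedAddCommGroup W] [InnerProductSpace ℝ W] [FiniteDimensional ℝ W]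
    {n k : ℕ} (D : Finset (Fin n → ℕ)) (hD : ∀ α ∈ D, ∑ i, α i = k)
    (Acoef : (Fin n → ℕ) → (V →L[ℝ] W))
    (𝒜 : EuclideanSpace ℝ (Fin n) → (V →L[ℝ] W))
    (h𝒜 : ∀ ξ : EuclideanSpace ℝ (Fin n), 𝒜 ξ = ∑ α ∈ D, (∏ i, ξ i ^ α i) • Acoef α)
    (m : ℕ)
    (hker : ∀ ξ : EuclideanSpace ℝ (Fin n), ξ ≠ 0 → finrank ℝ (LinearMap.ker (𝒜 ξ : V →ₗ[ℝ] W)) = m) :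
    ContDiffOn ℝ (⊤ : ℕ∞) (fun ξ => orthProj (LinearMap.ker (𝒜 ξ : V →ₗ[ℝ] W))) {ξ | ξ ≠ 0} := by

  have hA : ContDiff ℝ (⊤ : WithTop ℕ∞) 𝒜 := by
    have h : 𝒜 = fun ξ => ∑ α ∈ D, (∏ i, ξ i ^ α i) • Acoef α := funext h𝒜
    rw [h]
    refine ContDiff.sum fun α _ => ContDiff.fun_smul ?_ contDiff_const
    exact contDiff_prod (𝕜 := ℝ) (f := fun i (ξ : EuclideanSpace ℝ (Fin n)) => ξ i ^ α i)
      (fun i _ => ((EuclideanSpace.proj (𝕜 := ℝ) i).contDiff).pow (α i))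
  have hadj : ContDiff ℝ (⊤ : WithTop ℕ∞) (fun ξ => ContinuousLinearMap.adjoint (𝒜 ξ)) :=
    contDiff_adjoint'.comp hA
  set T : EuclideanSpace ℝ (Fin n) → V →L[ℝ] V :=
    fun ξ => (ContinuousLinearMap.adjoint (𝒜 ξ)) ∘L (𝒜 ξ) with hTdef
  have hTd : ContDiff ℝ (⊤ : WithTop ℕ∞) T := hadj.clm_comp hA
  intro ξ₀ hξ₀
  have hξ₀' : (ξ₀ : EuclideanSpace ℝ (Fin n)) ≠ 0 := hξ₀
  set K₀ := LinearMap.ker (𝒜 ξ₀ : V →ₗ[ℝ] W) with hK₀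
  set P₀ := orthProj K₀ with hP₀
  set S : EuclideanSpace ℝ (Fin n) → V →L[ℝ] V := fun ξ => T ξ + P₀ with hSdef
  have hSd : ContDiff ℝ (⊤ : WithTop ℕ∞) S := hTd.add contDiff_const
  have hS₀ : IsUnit (S ξ₀) := isUnit_S (𝒜 ξ₀)
  set U : Set (EuclideanSpace ℝ (Fin n)) := {ξ | ξ ≠ 0 ∧ IsUnit (S ξ)} with hUdef
  have hUopen : IsOpen U := by
    have h1 : IsOpen {ξ : EuclideanSpace ℝ (Fin n) | ξ ≠ 0} :=
      isOpen_compl_singleton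
    have h2 : IsOpen {B : V →L[ℝ] V | IsUnit B} := Units.isOpen
    exact h1.inter (h2.preimage hSd.continuous)
  have hξ₀U : ξ₀ ∈ U := ⟨hξ₀', hS₀⟩
  set Q : EuclideanSpace ℝ (Fin n) → V →L[ℝ] V :=
    fun ξ => Ring.inverse (S ξ) * P₀ with hQdef
  set R : EuclideanSpace ℝ (Fin n) → V →L[ℝ] V :=
    fun ξ => Q ξ + ContinuousLinearMap.adjoint (Q ξ) - 1 with hRdef
  set g : EuclideanSpace ℝ (Fin n) → V →L[ℝ] V :=
    fun ξ => Q ξ * Ring.inverse (R ξ) with hgdef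
  have hprops : ∀ ξ ∈ U, (Q ξ) * (Q ξ) = Q ξ
      ∧ LinearMap.range (Q ξ : V →ₗ[ℝ] V) = LinearMap.ker (𝒜 ξ : V →ₗ[ℝ] W) := by
    rintro ξ ⟨hξ, hunit⟩
    obtain ⟨u, hu⟩ := hunit
    have hinv : Ring.inverse (S ξ) = (↑u⁻¹ : V →L[ℝ] V) := by
      rw [← hu, Ring.inverse_unit]
    have hdim : finrank ℝ K₀ = finrank ℝ (LinearMap.ker (𝒜 ξ : V →ₗ[ℝ] W)) := by
      rw [hK₀, hker ξ₀ hξ₀', hker ξ hξ]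
    have hu' : (↑u : V →L[ℝ] V)
        = (ContinuousLinearMap.adjoint (𝒜 ξ)) ∘L (𝒜 ξ) + orthProj K₀ := hu
    have h := idem_and_range (𝒜 ξ) K₀ hdim u hu'
    rw [hQdef]
    simp only [hinv]
    exact h
  have heqg : ∀ ξ ∈ U, (IsUnit (R ξ)) ∧ orthProj (LinearMap.ker (𝒜 ξ : V →ₗ[ℝ] W)) = g ξ := by
    intro ξ hξ
    obtain ⟨hidem, hrange⟩ := hprops ξ hξ
    obtain ⟨hun, heq⟩ := orthProj_eq_of_idempotent (Q ξ) hidem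
    exact ⟨hun, by rw [← hrange]; exact heq⟩
  -- smoothness of g at ξ₀
  obtain ⟨u₀, hu₀⟩ := hS₀
  have hSinv : ContDiffAt ℝ (⊤ : WithTop ℕ∞) (fun ξ => Ring.inverse (S ξ)) ξ₀ := by
    have h1 : ContDiffAt ℝ (⊤ : WithTop ℕ∞) Ring.inverse (S ξ₀) := by
      rw [← hu₀]; exact contDiffAt_ringInverse ℝ u₀
    exact h1.comp ξ₀ hSd.contDiffAt
  have hQat : ContDiffAt ℝ (⊤ : WithTop ℕ∞) Q ξ₀ := hSinv.clm_comp contDiffAt_const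
  have hadjQ : ContDiffAt ℝ (⊤ : WithTop ℕ∞) (fun ξ => ContinuousLinearMap.adjoint (Q ξ)) ξ₀ :=
    contDiff_adjoint'.contDiffAt.comp ξ₀ hQat
  have hRat : ContDiffAt ℝ (⊤ : WithTop ℕ∞) R ξ₀ := (hQat.add hadjQ).sub contDiffAt_const
  obtain ⟨uR, huR⟩ := (heqg ξ₀ hξ₀U).1
  have hRinv : ContDiffAt ℝ (⊤ : WithTop ℕ∞) (fun ξ => Ring.inverse (R ξ)) ξ₀ := by
    have h1 : ContDiffAt ℝ (⊤ : WithTop ℕ∞) Ring.inverse (R ξ₀) := by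
      rw [← huR]; exact contDiffAt_ringInverse ℝ uR
    exact h1.comp ξ₀ hRat
  have hgat : ContDiffAt ℝ (⊤ : WithTop ℕ∞) g ξ₀ := hQat.clm_comp hRinv
  have hev : (fun ξ => orthProj (LinearMap.ker (𝒜 ξ : V →ₗ[ℝ] W))) =ᶠ[𝓝 ξ₀] g :=
    Filter.eventuallyEq_of_mem (hUopen.mem_nhds hξ₀U) (fun ξ hξ => (heqg ξ hξ).2)
  exact ((hgat.congr_of_eventuallyEq hev).contDiffWithinAt).of_le le_top
end
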